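/- Let fₙ : ℝ → ℝ be a sequence of concave functions converging pointwise to a function f : ℝ → ℝ that has a unique maximizer θ* and is strictly concave. If θ̂ₙ is any maximizer of fₙ, then θ̂ₙ → θ*. -/

import Mathlib

open Filter

lemma conc_between (g : ℝ → ℝ) (hg : ConcaveOn ℝ Set.univ g) {x m : ℝ}
    (a b : ℝ) (ha : 0 ≤ a) (hb : 0 ≤ b) (hab : a + b = 1) (hgm : g x ≤ g m) :
    g x ≤ g (a * x + b * m) := by
  have h := hg.2 (Set.mem_univ x) (Set.mem_univ m) ha hb hab
  simp only [smul_eq_mul] at h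
  have hb' : b * g x ≤ b * g m := mul_le_mul_of_nonneg_left hgm hb
  have e : g x = a * g x + b * g x := by rw [← add_mul, hab, one_mul]
  linarith

theorem stmt_11 (f : ℝ → ℝ) (fn : ℕ → ℝ → ℝ)
    (hconc : ∀ n, ConcaveOn ℝ Set.univ (fn n))
    (hlim : ∀ θ : ℝ, Tendsto (fun n => fn n θ) atTop (nhds (f θ)))
    (hstrict : StrictConcaveOn ℝ Set.univ f)
    (θstar : ℝ)
    (hmax : ∀ θ : ℝ, f θ ≤ f θstar)
    (huniq : ∀ θ : ℝ, f θ = f θstar → θ = θstar)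
    (θhat : ℕ → ℝ)
    (hhat : ∀ n, ∀ θ : ℝ, fn n θ ≤ fn n (θhat n)) :
    Tendsto θhat atTop (nhds θstar) := by
  rw [Metric.tendsto_atTop]
  intro ε hε
  -- gaps at θstar ± ε
  have hne1 : θstar + ε ≠ θstar := by linarith
  have hne2 : θstar - ε ≠ θstar := by linarith
  have hδ1 : f (θstar + ε) < f θstar :=
    lt_of_le_of_ne (hmax _) (fun h => hne1 (huniq _ h))
  have hδ2 : f (θstar - ε) < f θstar :=
    lt_of_le_of_ne (hmax _) (fun h => hne2 (huniq _ h))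
  set δ : ℝ := min (f θstar - f (θstar + ε)) (f θstar - f (θstar - ε)) with hδdef
  have hδpos : 0 < δ := lt_min (by linarith) (by linarith)
  have h0 := Metric.tendsto_atTop.1 (hlim θstar) (δ / 2) (by linarith)
  have h1 := Metric.tendsto_atTop.1 (hlim (θstar + ε)) (δ / 2) (by linarith)
  have h2 := Metric.tendsto_atTop.1 (hlim (θstar - ε)) (δ / 2) (by linarith)
  obtain ⟨N0, hN0⟩ := h0
  obtain ⟨N1, hN1⟩ := h1
  obtain ⟨N2, hN2⟩ := h2
  refine ⟨max N0 (max N1 N2), fun n hn => ?_⟩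
  have hn0 := hN0 n (le_trans (le_max_left _ _) hn)
  have hn1 := hN1 n (le_trans (le_trans (le_max_left _ _) (le_max_right _ _)) hn)
  have hn2 := hN2 n (le_trans (le_trans (le_max_right _ _) (le_max_right _ _)) hn)
  rw [Real.dist_eq] at hn0 hn1 hn2 ⊢
  rw [abs_lt] at hn0 hn1 hn2
  rw [abs_lt]
  by_contra hcon
  rw [not_and_or, not_lt, not_lt] at hcon
  have hδ1' : δ ≤ f θstar - f (θstar + ε) := min_le_left _ _
  have hδ2' : δ ≤ f θstar - f (θstar - ε) := min_le_right _ _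
  rcases hcon with hc | hc
  · -- θhat n ≤ θstar - ε
    set d : ℝ := θstar - θhat n with hd
    have hdε : ε ≤ d := by simp [hd]; linarith
    have hdpos : 0 < d := lt_of_lt_of_le hε hdε
    have key : fn n θstar ≤ fn n ((d - ε) / d * θstar + ε / d * θhat n) :=
      conc_between (fn n) (hconc n) _ _
        (div_nonneg (by linarith) hdpos.le) (div_nonneg hε.le hdpos.le)
        (by field_simp; ring) (hhat n θstar)
    have heq : (d - ε) / d * θstar + ε / d * θhat n = θstar - ε := by
      field_simp
      linear_combination ε * hd
    rw [heq] at key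
    linarith
  · -- θstar + ε ≤ θhat n
    set d : ℝ := θhat n - θstar with hd
    have hdε : ε ≤ d := by simp [hd]; linarith
    have hdpos : 0 < d := lt_of_lt_of_le hε hdε
    have key : fn n θstar ≤ fn n ((d - ε) / d * θstar + ε / d * θhat n) :=
      conc_between (fn n) (hconc n) _ _
        (div_nonneg (by linarith) hdpos.le) (div_nonneg hε.le hdpos.le)
        (by field_simp; ring) (hhat n θstar)
    have heq : (d - ε) / d * θstar + ε / d * θhat n = θstar + ε := by
      field_simp
      linear_combination (-ε) * hd
    rw [heq] at key
    linarith
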